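/- Let K, C ⊆ ℝⁿ be closed and let x ∈ ∂K ∩ ∂C satisfy Assumption 3 at x, namely: T_{∂K}(x) = T^a_{∂K}(x), T_C(x) = T^a_C(x), and there exist a neighborhood N(x) of x, c > 0 and α ∈ [0,1) such that for all x₁ ∈ (∂K \ C) ∩ N(x) and x₂ ∈ (∂C \ ∂K) ∩ N(x) there exist v₁ ∈ T_{∂K}(x₁) and v₂ ∈ T_C(x₂) with |(v₁,v₂)| ≤ c·|x₁ − x₂| and x₂ − x₁ ∈ v₁ − v₂ + α·|x₁ − x₂|·𝔹. Then T^a_{∂K ∩ C}(x) = T_{∂K ∩ C}(x) = T_{∂K}(x) ∩ T_C(x). -/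

import Mathlib

open MeasureTheory Filter Topology Set
open scoped RealInnerProductSpace

/-- Euclidean space ℝⁿ. -/
abbrev Euc (n : ℕ) := EuclideanSpace ℝ (Fin n)

variable {E : Type*} [NormedAddCommGroup E] [InnerProductSpace ℝ E]

/-- The contingent (Bouligand) cone to `S` at `x`:
`v` belongs to it iff there are sequences `tᵢ → 0⁺` and `vᵢ → v` with `x + tᵢ • vᵢ ∈ S`. -/
def contingentCone (S : Set E) (x : E) : Set E :=
  {v | ∃ t : ℕ → ℝ, ∃ w : ℕ → E,
    (∀ i, 0 < t i) ∧ Tendsto t atTop (𝓝 0) ∧ Tendsto w atTop (𝓝 v) ∧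
    ∀ i, x + t i • w i ∈ S}

/-- The adjacent cone to `S` at `x`:
`v` belongs to it iff for every sequence `tᵢ → 0⁺` there is `vᵢ → v` with `x + tᵢ • vᵢ ∈ S`. -/
def adjacentCone (S : Set E) (x : E) : Set E :=
  {v | ∀ t : ℕ → ℝ, (∀ i, 0 < t i) → Tendsto t atTop (𝓝 0) →
    ∃ w : ℕ → E, Tendsto w atTop (𝓝 v) ∧ ∀ i, x + t i • w i ∈ S}

/-- The Dubovitskiy cone to `S` at `x`. -/
def dubovitskiyCone (S : Set E) (x : E) : Set E :=
  {v | ∀ t : ℕ → ℝ, ∀ w : ℕ → E, (∀ i, 0 < t i) → Tendsto t atTop (𝓝 0) →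
    Tendsto w atTop (𝓝 v) → ∀ᶠ i in atTop, x + t i • w i ∈ interior S}

/-- Lower semicontinuity of a set-valued map at a point along a filter `l`. -/
def SVLowerSemicontinuousAt (F : E → Set E) (l : Filter E) (x : E) : Prop :=
  ∀ U : Set E, IsOpen U → (F x ∩ U).Nonempty → ∀ᶠ y in l, (F y ∩ U).Nonempty

/-- Upper semicontinuity of a set-valued map at a point along a filter `l`. -/
def SVUpperSemicontinuousAt (F : E → Set E) (l : Filter E) (x : E) : Prop :=
  ∀ U : Set E, IsOpen U → F x ⊆ U → ∀ᶠ y in l, F y ⊆ U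

/-- Continuity (lower and upper semicontinuity) of a set-valued map at `x` along `l`. -/
def SVContinuousAt (F : E → Set E) (l : Filter E) (x : E) : Prop :=
  SVLowerSemicontinuousAt F l x ∧ SVUpperSemicontinuousAt F l x

/-- Continuity of a set-valued map. -/
def SVContinuous (F : E → Set E) : Prop := ∀ x, SVContinuousAt F (𝓝 x) x

/-- Local boundedness of a set-valued map. -/
def SVLocallyBounded (F : E → Set E) : Prop :=
  ∀ x : E, ∃ N ∈ 𝓝 x, ∃ M : ℝ, ∀ y ∈ N, ∀ v ∈ F y, ‖v‖ ≤ M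

/-- One-sided local Lipschitz continuity of a set-valued map. -/
def OneSidedLocallyLipschitz (F : E → Set E) : Prop :=
  ∀ N : Set E, N.Nonempty → IsCompact N → ∃ k > 0, ∀ x₁ ∈ N, ∀ x₂ ∈ N,
    ∀ w₁ ∈ F x₁, ∃ w₂ ∈ F x₂, ⟪x₁ - x₂, w₁⟫ ≤ ⟪x₁ - x₂, w₂⟫ + k * ‖x₁ - x₂‖ ^ 2

/-- The standing assumption (SA): `C` closed; `F x` nonempty, closed, convex on `C`;
`F` continuous and one-sided locally Lipschitz. -/
structure StandingAssumption (F : E → Set E) (C : Set E) : Prop where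
  closed_C : IsClosed C
  nonempty_images : ∀ x ∈ C, (F x).Nonempty
  closed_images : ∀ x ∈ C, IsClosed (F x)
  convex_images : ∀ x ∈ C, Convex ℝ (F x)
  continuous : SVContinuous F
  osLipschitz : OneSidedLocallyLipschitz F

/-- Admissible solution domains: `[0,T]` with `T ≥ 0`, or `[0,T)` with `T ∈ (0,∞]`. -/
def IsSolDomain (D : Set ℝ) : Prop :=
  (∃ T : ℝ, 0 ≤ T ∧ D = Icc 0 T) ∨ (∃ T : ℝ, 0 < T ∧ D = Ico 0 T) ∨ D = Ici 0

/-- `φ` is a solution of the constrained differential inclusion `ẋ ∈ F(x)`, `x ∈ C`,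
on the domain `D`: it stays in `C` and is a locally absolutely continuous arc whose
derivative is an integrable selection of `F ∘ φ` almost everywhere. -/
def IsSolution (F : E → Set E) (C : Set E) (D : Set ℝ) (φ : ℝ → E) : Prop :=
  IsSolDomain D ∧ (∀ t ∈ D, φ t ∈ C) ∧
  ∃ g : ℝ → E,
    (∀ᵐ t ∂(volume.restrict D), g t ∈ F (φ t)) ∧
    ∀ t ∈ D, IntervalIntegrable g volume 0 t ∧ φ t = φ 0 + ∫ s in (0:ℝ)..t, g s

/-- Forward invariance of `K` for the constrained differential inclusion. -/
def ForwardInvariant (F : E → Set E) (C K : Set E) : Prop :=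
  ∀ D : Set ℝ, ∀ φ : ℝ → E, IsSolution F C D φ → φ 0 ∈ K → ∀ t ∈ D, φ t ∈ K

/-- The set 𝒫 of critical points: points of `∂K ∩ ∂C` every neighborhood of which
meets `C \ K`. -/
def critSet (K C : Set E) : Set E :=
  {x | x ∈ frontier K ∩ frontier C ∧ ∀ N ∈ 𝓝 x, (N ∩ (C \ K)).Nonempty}

/-- The set of initial speeds `F_φ(x)` of an arc `φ` at `x`. -/
def initialSpeeds (φ : ℝ → E) (x : E) : Set E :=
  {v | ∃ t : ℕ → ℝ, (∀ i, 0 < t i) ∧ Tendsto t atTop (𝓝 0) ∧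
    Tendsto (fun i => (t i)⁻¹ • (φ (t i) - x)) atTop (𝓝 v)}

/-- The metric projection of `y` onto `S`. -/
def projSet (S : Set E) (y : E) : Set E := {z ∈ S | dist y z = Metric.infDist y S}

/-- `φ` leaves `K` immediately: for some `T > 0`, `φ(t) ∈ C \ K` on `(0,T]`. -/
def LeavesImmediately (K C : Set E) (D : Set ℝ) (φ : ℝ → E) : Prop :=
  ∃ T > 0, Ioc 0 T ⊆ D ∧ ∀ t ∈ Ioc 0 T, φ t ∈ C \ K

/-- Property (★): for some `T > 0`, `Proj_{∂K}(φ(t)) ∩ int C ≠ ∅` on `(0,T]`. -/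
def PropStar (K C : Set E) (D : Set ℝ) (φ : ℝ → E) : Prop :=
  ∃ T > 0, Ioc 0 T ⊆ D ∧
    ∀ t ∈ Ioc 0 T, (projSet (frontier K) (φ t) ∩ interior C).Nonempty

/-- Euclidean norm of the concatenated vector `(v₁, v₂) ∈ ℝ²ⁿ`. -/
noncomputable def pairNorm (v₁ v₂ : E) : ℝ := Real.sqrt (‖v₁‖ ^ 2 + ‖v₂‖ ^ 2)

/-- Assumption 1: `F(x) ⊆ T_K(x)` on 𝒫. -/
def Assumption1 (F : E → Set E) (K C : Set E) : Prop :=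
  ∀ x ∈ critSet K C, F x ⊆ contingentCone K x

/-- Assumption 2: `F(x) ∩ T_{∂K ∩ ∂C}(x) = ∅` on 𝒫. -/
def Assumption2 (F : E → Set E) (K C : Set E) : Prop :=
  ∀ x ∈ critSet K C, F x ∩ contingentCone (frontier K ∩ frontier C) x = ∅

/-- Assumption 3 (transversality) at a point `x`. -/
def Assumption3At (K C : Set E) (x : E) : Prop :=
  contingentCone (frontier K) x = adjacentCone (frontier K) x ∧
  contingentCone C x = adjacentCone C x ∧
  ∃ N ∈ 𝓝 x, ∃ c > 0, ∃ α ∈ Ico (0:ℝ) 1,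
    ∀ x₁ ∈ (frontier K \ C) ∩ N, ∀ x₂ ∈ (frontier C \ frontier K) ∩ N,
      ∃ v₁ ∈ contingentCone (frontier K) x₁, ∃ v₂ ∈ contingentCone C x₂,
        pairNorm v₁ v₂ ≤ c * ‖x₁ - x₂‖ ∧ ‖(x₂ - x₁) - (v₁ - v₂)‖ ≤ α * ‖x₁ - x₂‖

/-- Assumption 3 (transversality) on 𝒫. -/
def Assumption3 (K C : Set E) : Prop := ∀ x ∈ critSet K C, Assumption3At K C x

/-- The transversality condition (◇) for a pair of sets at `x₀`. -/
def TransversalAt (K₁ K₂ : Set E) (x₀ : E) : Prop :=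
  ∃ N ∈ 𝓝 x₀, ∃ c > 0, ∃ α ∈ Ico (0:ℝ) 1,
    ∀ x₁ ∈ (frontier K₁ \ K₂) ∩ N, ∀ x₂ ∈ (frontier K₂ \ K₁) ∩ N,
      ∃ v₁ ∈ contingentCone K₁ x₁, ∃ v₂ ∈ contingentCone K₂ x₂,
        pairNorm v₁ v₂ ≤ c * ‖x₁ - x₂‖ ∧ ‖(x₂ - x₁) - (v₁ - v₂)‖ ≤ α * ‖x₁ - x₂‖

set_option maxHeartbeats 1600000

/-- Limit lemma: directional lower bound on the inner product from an Ekeland-type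
inequality along a contingent sequence. -/
lemma aux_inner_lower (d v : E) (σ : ℝ) (hd : d ≠ 0)
    (t : ℕ → ℝ) (w : ℕ → E) (ht : ∀ i, 0 < t i) (ht0 : Tendsto t atTop (𝓝 0))
    (hw : Tendsto w atTop (𝓝 v))
    (hineq : ∀ᶠ i in atTop, ‖d‖ - σ * (t i * ‖w i‖) ≤ ‖d + t i • w i‖) :
    -(σ * ‖d‖ * ‖v‖) ≤ ⟪d, v⟫ := by
  have hdpos : (0:ℝ) < ‖d‖ := norm_pos_iff.mpr hd
  have htw : Tendsto (fun i => σ * (t i * ‖w i‖)) atTop (𝓝 0) := by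
    have : Tendsto (fun i => t i * ‖w i‖) atTop (𝓝 (0 * ‖v‖)) :=
      ht0.mul hw.norm
    simpa using tendsto_const_nhds.mul this
  have hev : ∀ᶠ i in atTop, σ * (t i * ‖w i‖) ≤ ‖d‖ :=
    htw.eventually (eventually_le_nhds hdpos)
  have key : ∀ᶠ i in atTop,
      -(2 * σ * ‖d‖ * ‖w i‖) ≤ 2 * ⟪d, w i⟫ + t i * ‖w i‖ ^ 2 := by
    filter_upwards [hineq, hev] with i h1 h2
    have hti := ht i
    have hsq : (‖d‖ - σ * (t i * ‖w i‖)) ^ 2 ≤ ‖d + t i • w i‖ ^ 2 := by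
      have h0 : 0 ≤ ‖d‖ - σ * (t i * ‖w i‖) := by linarith
      nlinarith [norm_nonneg (d + t i • w i)]
    have hexp : ‖d + t i • w i‖ ^ 2
        = ‖d‖ ^ 2 + 2 * (t i * ⟪d, w i⟫) + t i ^ 2 * ‖w i‖ ^ 2 := by
      rw [@norm_add_sq_real, real_inner_smul_right, norm_smul]
      have : |t i| = t i := abs_of_pos hti
      simp [Real.norm_eq_abs, this]
      ring
    rw [hexp] at hsq
    have hdiv : -(2 * σ * ‖d‖ * (t i * ‖w i‖)) ≤ 2 * (t i * ⟪d, w i⟫) + t i ^ 2 * ‖w i‖ ^ 2 := by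
      nlinarith [sq_nonneg (σ * (t i * ‖w i‖))]
    have := mul_le_mul_of_nonneg_left hdiv (le_of_lt (inv_pos.mpr hti))
    calc -(2 * σ * ‖d‖ * ‖w i‖)
        = (t i)⁻¹ * (-(2 * σ * ‖d‖ * (t i * ‖w i‖))) := by field_simp
      _ ≤ (t i)⁻¹ * (2 * (t i * ⟪d, w i⟫) + t i ^ 2 * ‖w i‖ ^ 2) := this
      _ = 2 * ⟪d, w i⟫ + t i * ‖w i‖ ^ 2 := by field_simp
  have hA : Tendsto (fun i => 2 * ⟪d, w i⟫ + t i * ‖w i‖ ^ 2) atTop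
      (𝓝 (2 * ⟪d, v⟫ + 0 * ‖v‖ ^ 2)) := by
    exact ((tendsto_const_nhds.mul ((tendsto_const_nhds (x := d)).inner hw)).add
      (ht0.mul (hw.norm.pow 2)))
  have hB : Tendsto (fun i => -(2 * σ * ‖d‖ * ‖w i‖)) atTop
      (𝓝 (-(2 * σ * ‖d‖ * ‖v‖))) := (tendsto_const_nhds.mul hw.norm).neg
  have := le_of_tendsto_of_tendsto hB hA key
  simp only [zero_mul, add_zero] at this
  linarith

lemma key_estimate {n : ℕ} (K C : Set (Euc n)) (hC : IsClosed C)
    (x : Euc n) (N : Set (Euc n)) (hN : N ∈ 𝓝 x) (c : ℝ) (hc : 0 < c)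
    (α : ℝ) (hα : α ∈ Ico (0:ℝ) 1)
    (htr : ∀ x₁ ∈ (frontier K \ C) ∩ N, ∀ x₂ ∈ (frontier C \ frontier K) ∩ N,
      ∃ v₁ ∈ contingentCone (frontier K) x₁, ∃ v₂ ∈ contingentCone C x₂,
        pairNorm v₁ v₂ ≤ c * ‖x₁ - x₂‖ ∧ ‖(x₂ - x₁) - (v₁ - v₂)‖ ≤ α * ‖x₁ - x₂‖) :
    ∃ σ > 0, ∃ r > 0, ∀ a ∈ frontier K, ∀ b ∈ C, ‖a - x‖ ≤ r → ‖b - x‖ ≤ r →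
      ∃ z ∈ frontier K ∩ C, ‖z - a‖ ≤ σ⁻¹ * ‖a - b‖ := by
  obtain ⟨hα0, hα1⟩ := hα
  obtain ⟨R, hR0, hRN⟩ : ∃ R > 0, Metric.closedBall x R ⊆ N := by
    rcases Metric.nhds_basis_closedBall.mem_iff.mp hN with ⟨R, hR0, hRN⟩
    exact ⟨R, hR0, hRN⟩
  set σ : ℝ := min (1/2) ((1 - α)/(4*c)) with hσdef
  have hσ0 : 0 < σ := lt_min (by norm_num) (div_pos (by linarith) (by positivity))
  have hσhalf : σ ≤ 1/2 := min_le_left _ _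
  have hσc : 2 * σ * c ≤ (1 - α)/2 := by
    have h := min_le_right (1/2 : ℝ) ((1 - α)/(4*c))
    rw [← hσdef] at h
    have := mul_le_mul_of_nonneg_right h (le_of_lt hc)
    calc 2 * σ * c = 2 * (σ * c) := by ring
      _ ≤ 2 * ((1 - α)/(4*c) * c) := by linarith
      _ = (1 - α)/2 := by field_simp; ring
  refine ⟨σ, hσ0, σ * R / 16, by positivity, ?_⟩
  set r : ℝ := σ * R / 16 with hrdef
  have hr32 : r ≤ R / 32 := by
    rw [hrdef]; nlinarith
  intro a ha b hb har hbr
  set S : Set (Euc n × Euc n) :=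
    (frontier K ∩ Metric.closedBall x R) ×ˢ (C ∩ Metric.closedBall x R) with hSdef
  have hball : ∀ y : Euc n, ‖y - x‖ ≤ R → y ∈ Metric.closedBall x R := by
    intro y hy; rw [Metric.mem_closedBall, dist_eq_norm]; exact hy
  have hrR : r ≤ R := le_trans hr32 (by linarith)
  have hpS : (a, b) ∈ S :=
    ⟨⟨ha, hball a (le_trans har hrR)⟩, ⟨hb, hball b (le_trans hbr hrR)⟩⟩
  have hScomp : IsCompact S :=
    (((isCompact_closedBall x R).inter_left isClosed_frontier).prod
      ((isCompact_closedBall x R).inter_left hC))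
  have hΦcont : Continuous (fun p : Euc n × Euc n =>
      ‖p.1 - p.2‖ + σ * (‖p.1 - a‖ + ‖p.2 - b‖)) := by fun_prop
  obtain ⟨p, hpmem, hmin⟩ := hScomp.exists_isMinOn ⟨(a, b), hpS⟩ hΦcont.continuousOn
  obtain ⟨⟨ha₁K, ha₁B⟩, hb₁C, hb₁B⟩ := hpmem
  set a₁ := p.1 with ha₁def
  set b₁ := p.2 with hb₁def
  have hminle : ∀ q ∈ S, ‖a₁ - b₁‖ + σ * (‖a₁ - a‖ + ‖b₁ - b‖) ≤
      ‖q.1 - q.2‖ + σ * (‖q.1 - a‖ + ‖q.2 - b‖) := fun q hq => hmin hq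
  have hek : ∀ q ∈ S, ‖a₁ - b₁‖ - σ * (‖q.1 - a₁‖ + ‖q.2 - b₁‖) ≤ ‖q.1 - q.2‖ := by
    intro q hq
    have h := hminle q hq
    have t1 : ‖q.1 - a‖ ≤ ‖q.1 - a₁‖ + ‖a₁ - a‖ := norm_sub_le_norm_sub_add_norm_sub _ _ _
    have t2 : ‖q.2 - b‖ ≤ ‖q.2 - b₁‖ + ‖b₁ - b‖ := norm_sub_le_norm_sub_add_norm_sub _ _ _
    nlinarith
  have hΦ0 := hminle (a, b) hpS
  simp only [sub_self, norm_zero, add_zero, mul_zero] at hΦ0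
  have hmove : σ * (‖a₁ - a‖ + ‖b₁ - b‖) ≤ ‖a - b‖ := by
    have := norm_nonneg (a₁ - b₁); linarith
  have hab2r : ‖a - b‖ ≤ 2 * r := by
    have := norm_sub_le_norm_sub_add_norm_sub a x b
    have hx : ‖x - b‖ = ‖b - x‖ := norm_sub_rev _ _
    linarith
  have hfle : ‖a₁ - b₁‖ ≤ ‖a - b‖ := by
    have h1 : 0 ≤ σ * (‖a₁ - a‖ + ‖b₁ - b‖) := by positivity
    linarith
  have hmoveR : ‖a₁ - a‖ + ‖b₁ - b‖ ≤ R / 8 := by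
    have : σ * (‖a₁ - a‖ + ‖b₁ - b‖) ≤ σ * (R / 8) := by
      calc σ * (‖a₁ - a‖ + ‖b₁ - b‖) ≤ ‖a - b‖ := hmove
        _ ≤ 2 * r := hab2r
        _ = σ * (R / 8) := by rw [hrdef]; ring
    exact le_of_mul_le_mul_left this hσ0
  have ha₁x : ‖a₁ - x‖ ≤ R / 4 := by
    have := norm_sub_le_norm_sub_add_norm_sub a₁ a x
    have h2 : ‖b₁ - b‖ ≥ 0 := norm_nonneg _
    have h3 : r ≤ R / 32 := hr32
    linarith [le_trans har hr32]
  have hb₁x : ‖b₁ - x‖ ≤ R / 4 := by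
    have := norm_sub_le_norm_sub_add_norm_sub b₁ b x
    have h2 : ‖a₁ - a‖ ≥ 0 := norm_nonneg _
    linarith [le_trans hbr hr32]
  -- main claim: a₁ = b₁
  have hf0 : ‖a₁ - b₁‖ = 0 := by
    by_contra hf
    have hfpos : 0 < ‖a₁ - b₁‖ := lt_of_le_of_ne (norm_nonneg _) (Ne.symm hf)
    -- case i : a₁ ∉ C
    have haC : a₁ ∉ C := by
      intro hmem
      have hq : ((a₁, a₁) : Euc n × Euc n) ∈ S :=
        ⟨⟨ha₁K, hball a₁ (by linarith)⟩, hmem, hball a₁ (by linarith)⟩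
      have := hek (a₁, a₁) hq
      simp only [sub_self, norm_zero, zero_add, add_zero] at this
      have hn : ‖a₁ - b₁‖ = ‖b₁ - a₁‖ := norm_sub_rev _ _
      nlinarith
    -- case iii : b₁ ∉ frontier K
    have hbK : b₁ ∉ frontier K := by
      intro hmem
      have hq : ((b₁, b₁) : Euc n × Euc n) ∈ S :=
        ⟨⟨hmem, hball b₁ (by linarith)⟩, hb₁C, hball b₁ (by linarith)⟩
      have := hek (b₁, b₁) hq
      simp only [sub_self, norm_zero, add_zero] at this
      have hn : ‖b₁ - a₁‖ = ‖a₁ - b₁‖ := norm_sub_rev _ _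
      nlinarith
    -- case ii : b₁ ∈ frontier C
    have hbF : b₁ ∈ frontier C := by
      by_contra hmem
      have hint : b₁ ∈ interior C := by
        have hcl : b₁ ∈ closure C := subset_closure hb₁C
        rw [closure_eq_interior_union_frontier] at hcl
        exact hcl.resolve_right hmem
      rcases Metric.isOpen_iff.mp isOpen_interior b₁ hint with ⟨ε, hε0, hεball⟩
      set s : ℝ := min 1 (ε / (2 * ‖a₁ - b₁‖)) with hsdef
      have hs0 : 0 < s := lt_min one_pos (by positivity)
      have hs1 : s ≤ 1 := min_le_left _ _
      have hsε : s * ‖a₁ - b₁‖ ≤ ε / 2 := by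
        have h := min_le_right 1 (ε / (2 * ‖a₁ - b₁‖))
        rw [← hsdef] at h
        have := mul_le_mul_of_nonneg_right h (le_of_lt hfpos)
        calc s * ‖a₁ - b₁‖ ≤ ε / (2 * ‖a₁ - b₁‖) * ‖a₁ - b₁‖ := this
          _ = ε / 2 := by field_simp
      set b' := b₁ + s • (a₁ - b₁) with hb'def
      have hb'C : b' ∈ C := by
        apply interior_subset
        apply hεball
        rw [Metric.mem_ball, dist_eq_norm, hb'def]
        simp only [add_sub_cancel_left]
        rw [norm_smul, Real.norm_eq_abs, abs_of_pos hs0]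
        linarith
      have hb'x : ‖b' - x‖ ≤ R := by
        have h1 : ‖b' - b₁‖ = s * ‖a₁ - b₁‖ := by
          rw [hb'def]; simp only [add_sub_cancel_left]
          rw [norm_smul, Real.norm_eq_abs, abs_of_pos hs0]
        have h2 := norm_sub_le_norm_sub_add_norm_sub b' b₁ x
        have h3 : s * ‖a₁ - b₁‖ ≤ ‖a₁ - b₁‖ := by nlinarith
        have h4 : ‖a₁ - b₁‖ ≤ 2 * r := le_trans hfle hab2r
        linarith [hr32]
      have hq : ((a₁, b') : Euc n × Euc n) ∈ S :=
        ⟨⟨ha₁K, hball a₁ (by linarith)⟩, hb'C, hball b' hb'x⟩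
      have h := hek (a₁, b') hq
      have e1 : ‖a₁ - b'‖ = (1 - s) * ‖a₁ - b₁‖ := by
        rw [hb'def]
        have : a₁ - (b₁ + s • (a₁ - b₁)) = (1 - s) • (a₁ - b₁) := by
          rw [sub_smul, one_smul]; abel
        rw [this, norm_smul, Real.norm_eq_abs, abs_of_nonneg (by linarith)]
      have e2 : ‖b' - b₁‖ = s * ‖a₁ - b₁‖ := by
        rw [hb'def]; simp only [add_sub_cancel_left]
        rw [norm_smul, Real.norm_eq_abs, abs_of_pos hs0]
      simp only [sub_self, norm_zero, zero_add] at h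
      rw [e1, e2] at h
      nlinarith [mul_pos hs0 hfpos]
    -- case iv : transversality
    have ha₁N : a₁ ∈ (frontier K \ C) ∩ N :=
      ⟨⟨ha₁K, haC⟩, hRN (hball a₁ (by linarith))⟩
    have hb₁N : b₁ ∈ (frontier C \ frontier K) ∩ N :=
      ⟨⟨hbF, hbK⟩, hRN (hball b₁ (by linarith))⟩
    obtain ⟨v₁, hv₁, v₂, hv₂, hpair, halpha⟩ := htr a₁ ha₁N b₁ hb₁N
    have hv1n : ‖v₁‖ ≤ c * ‖a₁ - b₁‖ := by
      have h1 : ‖v₁‖ ≤ pairNorm v₁ v₂ := by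
        rw [pairNorm]
        nlinarith [Real.sq_sqrt (show (0:ℝ) ≤ ‖v₁‖ ^ 2 + ‖v₂‖ ^ 2 by positivity),
          Real.sqrt_nonneg (‖v₁‖ ^ 2 + ‖v₂‖ ^ 2), norm_nonneg v₁, sq_nonneg ‖v₂‖]
      linarith
    have hv2n : ‖v₂‖ ≤ c * ‖a₁ - b₁‖ := by
      have h1 : ‖v₂‖ ≤ pairNorm v₁ v₂ := by
        rw [pairNorm]
        nlinarith [Real.sq_sqrt (show (0:ℝ) ≤ ‖v₁‖ ^ 2 + ‖v₂‖ ^ 2 by positivity),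
          Real.sqrt_nonneg (‖v₁‖ ^ 2 + ‖v₂‖ ^ 2), norm_nonneg v₂, sq_nonneg ‖v₁‖]
      linarith
    have hd : a₁ - b₁ ≠ 0 := fun h => hf (by rw [h, norm_zero])
    have hd' : b₁ - a₁ ≠ 0 := fun h => hf (by rw [norm_sub_rev, h, norm_zero])
    have hnrev : ‖b₁ - a₁‖ = ‖a₁ - b₁‖ := norm_sub_rev _ _
    -- lower bound from v₁
    have hlow1 : -(σ * ‖a₁ - b₁‖ * ‖v₁‖) ≤ ⟪a₁ - b₁, v₁⟫ := by
      obtain ⟨t, w, htpos, ht0, hwv, hmem⟩ := hv₁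
      apply aux_inner_lower _ _ _ hd t w htpos ht0 hwv
      have htw0 : Tendsto (fun i => t i * ‖w i‖) atTop (𝓝 0) := by
        have := ht0.mul hwv.norm; simpa using this
      filter_upwards [htw0.eventually (eventually_le_nhds (by linarith : (0:ℝ) < R/2))]
        with i hi
      have hq : ((a₁ + t i • w i, b₁) : Euc n × Euc n) ∈ S := by
        refine ⟨⟨hmem i, hball _ ?_⟩, hb₁C, hball b₁ (by linarith)⟩
        have h1 : ‖a₁ + t i • w i - x‖ ≤ ‖a₁ - x‖ + ‖t i • w i‖ := by
          have : a₁ + t i • w i - x = (a₁ - x) + t i • w i := by abel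
          rw [this]; exact norm_add_le _ _
        rw [norm_smul, Real.norm_eq_abs, abs_of_pos (htpos i)] at h1
        linarith
      have h := hek _ hq
      simp only at h
      have e1 : a₁ + t i • w i - a₁ = t i • w i := by abel
      have e2 : a₁ + t i • w i - b₁ = (a₁ - b₁) + t i • w i := by abel
      rw [e1, e2] at h
      rw [norm_smul, Real.norm_eq_abs, abs_of_pos (htpos i)] at h
      simpa [sub_self, norm_zero] using h
    -- lower bound from v₂
    have hlow2 : -(σ * ‖b₁ - a₁‖ * ‖v₂‖) ≤ ⟪b₁ - a₁, v₂⟫ := by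
      obtain ⟨t, w, htpos, ht0, hwv, hmem⟩ := hv₂
      apply aux_inner_lower _ _ _ hd' t w htpos ht0 hwv
      have htw0 : Tendsto (fun i => t i * ‖w i‖) atTop (𝓝 0) := by
        have := ht0.mul hwv.norm; simpa using this
      filter_upwards [htw0.eventually (eventually_le_nhds (by linarith : (0:ℝ) < R/2))]
        with i hi
      have hq : ((a₁, b₁ + t i • w i) : Euc n × Euc n) ∈ S := by
        refine ⟨⟨ha₁K, hball a₁ (by linarith)⟩, hmem i, hball _ ?_⟩
        have h1 : ‖b₁ + t i • w i - x‖ ≤ ‖b₁ - x‖ + ‖t i • w i‖ := by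
          have : b₁ + t i • w i - x = (b₁ - x) + t i • w i := by abel
          rw [this]; exact norm_add_le _ _
        rw [norm_smul, Real.norm_eq_abs, abs_of_pos (htpos i)] at h1
        linarith
      have h := hek _ hq
      simp only at h
      have e1 : b₁ + t i • w i - b₁ = t i • w i := by abel
      have e2 : a₁ - (b₁ + t i • w i) = -((b₁ - a₁) + t i • w i) := by abel
      rw [e1, e2, norm_neg] at h
      rw [norm_smul, Real.norm_eq_abs, abs_of_pos (htpos i)] at h
      rw [hnrev]
      simpa [sub_self, norm_zero] using h
    -- combine
    have hcomb : -(2 * σ * c * ‖a₁ - b₁‖ ^ 2) ≤ ⟪a₁ - b₁, v₁ - v₂⟫ := by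
      have e : ⟪a₁ - b₁, v₁ - v₂⟫ = ⟪a₁ - b₁, v₁⟫ + ⟪b₁ - a₁, v₂⟫ := by
        rw [inner_sub_right]
        have : (b₁ - a₁ : Euc n) = -(a₁ - b₁) := by abel
        rw [this, inner_neg_left]; ring
      rw [e]
      have h1 : -(σ * ‖a₁ - b₁‖ * (c * ‖a₁ - b₁‖)) ≤ ⟪a₁ - b₁, v₁⟫ := by
        have : σ * ‖a₁ - b₁‖ * ‖v₁‖ ≤ σ * ‖a₁ - b₁‖ * (c * ‖a₁ - b₁‖) := by
          apply mul_le_mul_of_nonneg_left hv1n; positivity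
        linarith
      have h2 : -(σ * ‖a₁ - b₁‖ * (c * ‖a₁ - b₁‖)) ≤ ⟪b₁ - a₁, v₂⟫ := by
        rw [hnrev] at hlow2
        have : σ * ‖a₁ - b₁‖ * ‖v₂‖ ≤ σ * ‖a₁ - b₁‖ * (c * ‖a₁ - b₁‖) := by
          apply mul_le_mul_of_nonneg_left hv2n; positivity
        linarith
      nlinarith
    have hupper : ⟪a₁ - b₁, v₁ - v₂⟫ ≤ -(1 - α) * ‖a₁ - b₁‖ ^ 2 := by
      have e : ⟪a₁ - b₁, v₁ - v₂⟫
          = ⟪a₁ - b₁, b₁ - a₁⟫ + ⟪a₁ - b₁, (v₁ - v₂) - (b₁ - a₁)⟫ := by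
        rw [← inner_add_right]; congr 1; abel
      have e2 : ⟪a₁ - b₁, b₁ - a₁⟫ = -(‖a₁ - b₁‖ ^ 2) := by
        have : (b₁ - a₁ : Euc n) = -(a₁ - b₁) := by abel
        rw [this, inner_neg_right, real_inner_self_eq_norm_sq]
      have e3 : ⟪a₁ - b₁, (v₁ - v₂) - (b₁ - a₁)⟫ ≤ ‖a₁ - b₁‖ * (α * ‖a₁ - b₁‖) := by
        calc ⟪a₁ - b₁, (v₁ - v₂) - (b₁ - a₁)⟫
            ≤ ‖a₁ - b₁‖ * ‖(v₁ - v₂) - (b₁ - a₁)‖ := real_inner_le_norm _ _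
          _ ≤ ‖a₁ - b₁‖ * (α * ‖a₁ - b₁‖) := by
              apply mul_le_mul_of_nonneg_left _ (norm_nonneg _)
              rw [show ((v₁ - v₂) - (b₁ - a₁) : Euc n) = -((b₁ - a₁) - (v₁ - v₂)) by abel,
                norm_neg]
              exact halpha
      rw [e, e2]; nlinarith
    have hff : 0 < ‖a₁ - b₁‖ ^ 2 := by positivity
    nlinarith [mul_le_mul_of_nonneg_right hσc (le_of_lt hff),
      mul_pos (show (0:ℝ) < (1 - α)/2 by linarith) hff]
  -- conclude
  have hab₁ : a₁ = b₁ := by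
    have := norm_eq_zero.mp hf0; exact sub_eq_zero.mp this
  refine ⟨a₁, ⟨ha₁K, hab₁ ▸ hb₁C⟩, ?_⟩
  rw [inv_mul_eq_div, le_div_iff₀ hσ0, mul_comm]
  have h1 : 0 ≤ σ * ‖b₁ - b‖ := by positivity
  have h2 : ‖a₁ - a‖ ≤ ‖a₁ - a‖ + ‖b₁ - b‖ := by linarith [norm_nonneg (b₁ - b)]
  nlinarith [norm_nonneg (a₁ - a), norm_nonneg (b₁ - b)]

lemma adjacent_subset_contingent (S : Set E) (x : E) :
    adjacentCone S x ⊆ contingentCone S x := by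
  intro v hv
  have htpos : ∀ i : ℕ, (0:ℝ) < 1 / (i + 1) := fun i => by positivity
  obtain ⟨w, hw, hmem⟩ := hv (fun i : ℕ => 1 / (i + 1)) htpos
    tendsto_one_div_add_atTop_nhds_zero_nat
  exact ⟨_, w, htpos, tendsto_one_div_add_atTop_nhds_zero_nat, hw, hmem⟩

lemma contingent_mono {S T : Set E} (h : S ⊆ T) (x : E) :
    contingentCone S x ⊆ contingentCone T x := by
  rintro v ⟨t, w, h1, h2, h3, h4⟩
  exact ⟨t, w, h1, h2, h3, fun i => h (h4 i)⟩


/-- Under Assumption 3 at `x ∈ ∂K ∩ ∂C`,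
`T^a_{∂K ∩ C}(x) = T_{∂K ∩ C}(x) = T_{∂K}(x) ∩ T_C(x)`. -/
theorem cone_intersection_boundary_constraint {n : ℕ} (K C : Set (Euc n))
    (hK : IsClosed K) (hC : IsClosed C)
    (x : Euc n) (hx : x ∈ frontier K ∩ frontier C)
    (h3 : Assumption3At K C x) :
    adjacentCone (frontier K ∩ C) x = contingentCone (frontier K ∩ C) x ∧
      contingentCone (frontier K ∩ C) x =
        contingentCone (frontier K) x ∩ contingentCone C x := by

  obtain ⟨hKa, hCa, N, hN, c, hc, α, hα, htr⟩ := h3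
  obtain ⟨σ, hσ, r, hr, hkey⟩ := key_estimate K C hC x N hN c hc α hα htr
  have hxKC : x ∈ frontier K ∩ C := ⟨hx.1, hC.frontier_subset hx.2⟩
  have hmain : contingentCone (frontier K) x ∩ contingentCone C x ⊆
      adjacentCone (frontier K ∩ C) x := by
    rintro v ⟨hv1, hv2⟩
    rw [hKa] at hv1
    rw [hCa] at hv2
    intro t htpos ht0
    obtain ⟨w, hw, hwK⟩ := hv1 t htpos ht0
    obtain ⟨u, hu, huC⟩ := hv2 t htpos ht0
    have h1 : Tendsto (fun i => t i * ‖w i‖) atTop (𝓝 0) := by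
      simpa using ht0.mul hw.norm
    have h2 : Tendsto (fun i => t i * ‖u i‖) atTop (𝓝 0) := by
      simpa using ht0.mul hu.norm
    have hev : ∀ᶠ i in atTop, t i * ‖w i‖ ≤ r ∧ t i * ‖u i‖ ≤ r :=
      (h1.eventually (eventually_le_nhds hr)).and (h2.eventually (eventually_le_nhds hr))
    obtain ⟨I₀, hI₀⟩ := eventually_atTop.mp hev
    have hnorm1 : ∀ i, ‖x + t i • w i - x‖ = t i * ‖w i‖ := by
      intro i
      rw [add_sub_cancel_left, norm_smul, Real.norm_eq_abs, abs_of_pos (htpos i)]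
    have hnorm2 : ∀ i, ‖x + t i • u i - x‖ = t i * ‖u i‖ := by
      intro i
      rw [add_sub_cancel_left, norm_smul, Real.norm_eq_abs, abs_of_pos (htpos i)]
    have hP : ∀ i, I₀ ≤ i → ∃ z ∈ frontier K ∩ C,
        ‖z - (x + t i • w i)‖ ≤ σ⁻¹ * (t i * ‖w i - u i‖) := by
      intro i hi
      obtain ⟨hw', hu'⟩ := hI₀ i hi
      obtain ⟨z, hz, hzle⟩ := hkey (x + t i • w i) (hwK i) (x + t i • u i) (huC i)
        (by rw [hnorm1]; exact hw') (by rw [hnorm2]; exact hu')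
      refine ⟨z, hz, ?_⟩
      have : ‖x + t i • w i - (x + t i • u i)‖ = t i * ‖w i - u i‖ := by
        have e : x + t i • w i - (x + t i • u i) = t i • (w i - u i) := by
          rw [smul_sub]; abel
        rw [e, norm_smul, Real.norm_eq_abs, abs_of_pos (htpos i)]
      rwa [this] at hzle
    set z : ℕ → Euc n := fun i => if h : I₀ ≤ i then (hP i h).choose else x with hzdef
    have hzmem : ∀ i, z i ∈ frontier K ∩ C := by
      intro i
      rw [hzdef]
      by_cases h : I₀ ≤ i
      · simp only [h, dif_pos]
        exact (hP i h).choose_spec.1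
      · simp only [h, dif_neg, not_false_iff]
        exact hxKC
    have hzle : ∀ i, I₀ ≤ i → ‖z i - (x + t i • w i)‖ ≤ σ⁻¹ * (t i * ‖w i - u i‖) := by
      intro i h
      rw [hzdef]
      simp only [h, dif_pos]
      exact (hP i h).choose_spec.2
    refine ⟨fun i => (t i)⁻¹ • (z i - x), ?_, ?_⟩
    · rw [tendsto_iff_norm_sub_tendsto_zero]
      apply squeeze_zero' (Eventually.of_forall fun i => norm_nonneg _)
        (g := fun i => σ⁻¹ * ‖w i - u i‖ + ‖w i - v‖)
      · filter_upwards [eventually_ge_atTop I₀] with i hi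
        have hti : t i ≠ 0 := ne_of_gt (htpos i)
        have e1 : (t i)⁻¹ • (z i - x) - v = (t i)⁻¹ • (z i - x - t i • v) := by
          have h := smul_sub ((t i)⁻¹) (z i - x) (t i • v)
          rw [h, smul_smul, inv_mul_cancel₀ hti, one_smul]
        have e2 : z i - x - t i • v = (z i - (x + t i • w i)) + t i • (w i - v) := by
          rw [smul_sub]; abel
        rw [e1, e2, norm_smul, Real.norm_eq_abs, abs_of_pos (inv_pos.mpr (htpos i))]
        have h3 : ‖z i - (x + t i • w i) + t i • (w i - v)‖
            ≤ σ⁻¹ * (t i * ‖w i - u i‖) + t i * ‖w i - v‖ := by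
          calc ‖z i - (x + t i • w i) + t i • (w i - v)‖
              ≤ ‖z i - (x + t i • w i)‖ + ‖t i • (w i - v)‖ := norm_add_le _ _
            _ ≤ σ⁻¹ * (t i * ‖w i - u i‖) + t i * ‖w i - v‖ := by
                rw [norm_smul, Real.norm_eq_abs, abs_of_pos (htpos i)]
                exact add_le_add_left (hzle i hi) _
        calc (t i)⁻¹ * ‖z i - (x + t i • w i) + t i • (w i - v)‖
            ≤ (t i)⁻¹ * (σ⁻¹ * (t i * ‖w i - u i‖) + t i * ‖w i - v‖) := by
              exact mul_le_mul_of_nonneg_left h3 (le_of_lt (inv_pos.mpr (htpos i)))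
          _ = σ⁻¹ * ‖w i - u i‖ + ‖w i - v‖ := by field_simp
      · have hg : Tendsto (fun i => σ⁻¹ * ‖w i - u i‖ + ‖w i - v‖) atTop
            (𝓝 (σ⁻¹ * ‖v - v‖ + ‖v - v‖)) :=
          (tendsto_const_nhds.mul (hw.sub hu).norm).add (hw.sub tendsto_const_nhds).norm
        simpa using hg
    · intro i
      have hti : t i ≠ 0 := ne_of_gt (htpos i)
      have : x + t i • ((t i)⁻¹ • (z i - x)) = z i := by
        rw [smul_smul, mul_inv_cancel₀ hti, one_smul]; abel
      rw [this]
      exact hzmem i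
  have hsub2 : contingentCone (frontier K ∩ C) x ⊆
      contingentCone (frontier K) x ∩ contingentCone C x := fun v hv =>
    ⟨contingent_mono inter_subset_left x hv, contingent_mono inter_subset_right x hv⟩
  constructor
  · exact Subset.antisymm (adjacent_subset_contingent _ _)
      (fun v hv => hmain (hsub2 hv))
  · exact Subset.antisymm hsub2
      (fun v hv => adjacent_subset_contingent _ _ (hmain hv))
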